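/- Let d be an odd prime, ω = e^{2πi/d}, and define for j ∈ {1,...,d} the Hadamard matrices [H_j]_{xk} = d^{-1/2} ω^{-kx} ω^{(j-1)x²}. Then for j ≠ k in {1,...,d}, H_k† H_j = M H_t† for some monomial matrix M (product of a permutation matrix and a diagonal unitary), where t = 1 + χ and χ ∈ {0,...,d-1} satisfies 4(j-k)χ ≡ 1 (mod d). -/

import Mathlib

open Complex Real Matrix

/-- Support size: number of nonzero coordinates. -/
noncomputable def supp {d : ℕ} (ψ : Fin d → ℂ) : ℕ :=
  (Finset.univ.filter (fun v => ψ v ≠ 0)).card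

/-- The discrete Fourier matrix `F_{v v'} = d^{-1/2} e^{-2πi v v' / d}`. -/
noncomputable def Fourier (d : ℕ) : Matrix (Fin d) (Fin d) ℂ :=
  fun v v' => (1 / Real.sqrt d : ℂ) *
    Complex.exp (-(2 * Real.pi * Complex.I * (v : ℕ) * (v' : ℕ)) / d)

/-- The standard Hadamard matrices `[H_j]_{xk} = d^{-1/2} ω^{-kx + (j-1)x²}`,
    with `ω = e^{2πi/d}`, for `j ∈ {1,…,d}`. -/
noncomputable def stdH (d j : ℕ) : Matrix (Fin d) (Fin d) ℂ :=
  fun x k => (1 / Real.sqrt d : ℂ) *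
    Complex.exp (2 * Real.pi * Complex.I *
      (((((j : ℤ) - 1) * (x : ℤ) ^ 2 - (k : ℤ) * (x : ℤ) : ℤ) : ℂ) / (d : ℂ)))

/-- The complete standard set of MU bases: `H_0 = I` (the computational basis)
    together with `H_1, …, H_d`. -/
noncomputable def stdB (d j : ℕ) : Matrix (Fin d) (Fin d) ℂ :=
  if j = 0 then 1 else stdH d j

/-- A monomial matrix: exactly one nonzero, unit-modulus entry in each row and column,
i.e. the product of a diagonal unitary (rephasing) and a permutation matrix. -/
def IsMonomial {d : ℕ} (M : Matrix (Fin d) (Fin d) ℂ) : Prop :=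
  ∃ (σ : Equiv.Perm (Fin d)) (u : Fin d → ℂ),
    (∀ i, ‖u i‖ = 1) ∧
    M = Matrix.of (fun i j => if j = σ i then u i else 0)

namespace HadAux

noncomputable def ζ (d : ℕ) : ℂ := Complex.exp (2 * Real.pi * Complex.I / d)

lemma zeta_ne_zero (d : ℕ) : ζ d ≠ 0 := Complex.exp_ne_zero _

lemma zeta_pow_d {d : ℕ} (hd : d ≠ 0) : ζ d ^ (d : ℤ) = 1 := by
  have hdc : (d : ℂ) ≠ 0 := Nat.cast_ne_zero.mpr hd
  rw [ζ, ← Complex.exp_int_mul]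
  rw [show ((d : ℤ) : ℂ) * (2 * Real.pi * Complex.I / d) = 2 * Real.pi * Complex.I by
    push_cast; field_simp]
  exact Complex.exp_two_pi_mul_I

lemma zeta_pow_d' {d : ℕ} (hd : d ≠ 0) : ζ d ^ d = 1 := by
  have := zeta_pow_d hd; rwa [zpow_natCast] at this

lemma zeta_zpow_congr {d : ℕ} (hd : d ≠ 0) {m n : ℤ} (h : m ≡ n [ZMOD (d : ℤ)]) :
    ζ d ^ m = ζ d ^ n := by
  obtain ⟨t, ht⟩ := h.dvd
  have hn : n = m + (d : ℤ) * t := by omega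
  rw [hn, zpow_add₀ (zeta_ne_zero d), _root_.zpow_mul, zeta_pow_d hd, _root_.one_zpow, mul_one]

noncomputable def E (d : ℕ) (z : ZMod d) : ℂ := ζ d ^ (z.val : ℤ)

lemma E_intCast {d : ℕ} [NeZero d] (n : ℤ) : E d ((n : ZMod d)) = ζ d ^ n := by
  apply zeta_zpow_congr (NeZero.ne d)
  rw [← ZMod.intCast_eq_intCast_iff]
  push_cast
  simp [ZMod.natCast_zmod_val]

lemma E_add {d : ℕ} [NeZero d] (a b : ZMod d) : E d (a + b) = E d a * E d b := by
  have ha : a = ((a.val : ℤ) : ZMod d) := by push_cast; simp [ZMod.natCast_zmod_val]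
  have hb : b = ((b.val : ℤ) : ZMod d) := by push_cast; simp [ZMod.natCast_zmod_val]
  rw [ha, hb, ← Int.cast_add, E_intCast, E_intCast, E_intCast,
    zpow_add₀ (zeta_ne_zero d)]

lemma E_zero {d : ℕ} [NeZero d] : E d 0 = 1 := by
  rw [E, ZMod.val_zero]; simp

lemma zeta_eq (d : ℕ) : ζ d = Complex.exp (((2 * Real.pi / d : ℝ) : ℂ) * Complex.I) := by
  rw [ζ]; congr 1; push_cast; ring

lemma conj_zeta (d : ℕ) : (starRingEnd ℂ) (ζ d) = (ζ d)⁻¹ := by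
  rw [zeta_eq, ← Complex.exp_conj, ← Complex.exp_neg]
  congr 1
  simp [Complex.conj_ofReal, map_ofNat]

lemma E_conj {d : ℕ} [NeZero d] (z : ZMod d) : (starRingEnd ℂ) (E d z) = E d (-z) := by
  have h2 : E d (-z) = ζ d ^ (-(z.val : ℤ)) := by
    rw [show -z = ((Int.cast (-(z.val : ℤ)) : ZMod d)) from by
      push_cast; simp [ZMod.natCast_zmod_val], E_intCast]
  rw [h2, E, map_zpow₀, conj_zeta, _root_.inv_zpow, ← _root_.zpow_neg]

lemma abs_zeta (d : ℕ) : ‖ζ d‖ = 1 := by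
  rw [ζ, show (2 * (Real.pi : ℂ) * Complex.I / d) =
      ((2 * Real.pi / d : ℝ) : ℂ) * Complex.I by push_cast; ring]
  exact Complex.norm_exp_ofReal_mul_I _

lemma abs_E {d : ℕ} (z : ZMod d) : ‖E d z‖ = 1 := by
  rw [E, norm_zpow, abs_zeta, _root_.one_zpow]

def finEquivZMod (d : ℕ) [NeZero d] : Fin d ≃ ZMod d where
  toFun i := ((i : ℕ) : ZMod d)
  invFun z := ⟨z.val, z.val_lt⟩
  left_inv i := by ext; simp [ZMod.val_cast_of_lt i.isLt]
  right_inv z := by simp [ZMod.natCast_zmod_val]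

@[simp] lemma finEquivZMod_apply {d : ℕ} [NeZero d] (i : Fin d) :
    finEquivZMod d i = ((i : ℕ) : ZMod d) := rfl

lemma zeta_ne_one {d : ℕ} (hd1 : 1 < d) : ζ d ≠ 1 := by
  intro h
  rw [ζ, Complex.exp_eq_one_iff] at h
  obtain ⟨n, hn⟩ := h
  have hd0 : (d : ℂ) ≠ 0 := Nat.cast_ne_zero.mpr (by omega)
  have h2 : (2 * (Real.pi : ℂ) * Complex.I) ≠ 0 := by
    simp [Real.pi_ne_zero, Complex.I_ne_zero]
  rw [div_eq_iff hd0] at hn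
  have hmul : (2 * (Real.pi : ℂ) * Complex.I) * ((n : ℂ) * d) =
      (2 * (Real.pi : ℂ) * Complex.I) * 1 := by linear_combination -hn
  have h3 := mul_left_cancel₀ h2 hmul
  have h4 : (n * d : ℤ) = 1 := by exact_mod_cast h3
  have h5 : (d : ℤ) ∣ 1 := ⟨n, by linarith [h4]⟩
  have h6 : d ∣ 1 := by exact_mod_cast h5
  rw [Nat.dvd_one] at h6; omega

lemma sum_E {d : ℕ} [NeZero d] (hd1 : 1 < d) : ∑ z : ZMod d, E d z = 0 := by
  rw [← Equiv.sum_comp (finEquivZMod d) (E d)]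
  have : ∀ i : Fin d, E d (finEquivZMod d i) = ζ d ^ (i : ℕ) := by
    intro i
    rw [finEquivZMod_apply, E, ZMod.val_cast_of_lt i.isLt, zpow_natCast]
  rw [Finset.sum_congr rfl fun i _ => this i, Fin.sum_univ_eq_sum_range,
    geom_sum_eq (zeta_ne_one hd1), zeta_pow_d' (by omega)]
  simp

lemma sum_E_mul {d : ℕ} [Fact d.Prime] {c : ZMod d} (hc : c ≠ 0) :
    ∑ z : ZMod d, E d (c * z) = 0 := by
  haveI : NeZero d := ⟨(Fact.out : d.Prime).ne_zero⟩
  have h := Equiv.sum_comp (Equiv.mulLeft₀ c hc) (E d)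
  simp only [Equiv.mulLeft₀_apply] at h
  rw [h]
  exact sum_E (Fact.out : d.Prime).one_lt


lemma two_ne_zero' {d : ℕ} [Fact d.Prime] (hodd : Odd d) : (2 : ZMod d) ≠ 0 := by
  have hd : d.Prime := Fact.out
  intro h
  have h2 : ((2 : ℕ) : ZMod d) = 0 := by exact_mod_cast h
  rw [ZMod.natCast_eq_zero_iff] at h2
  have : d = 2 := (Nat.prime_dvd_prime_iff_eq hd Nat.prime_two).mp h2
  rw [this] at hodd
  simp [Nat.odd_iff] at hodd

lemma gauss_mul_conj {d : ℕ} [Fact d.Prime] (hodd : Odd d) {m : ZMod d} (hm : m ≠ 0) :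
    (∑ x : ZMod d, E d (m * x ^ 2)) * (starRingEnd ℂ) (∑ x : ZMod d, E d (m * x ^ 2))
      = (d : ℂ) := by
  haveI : NeZero d := ⟨(Fact.out : d.Prime).ne_zero⟩
  rw [map_sum, Finset.mul_sum]
  have step1 : ∀ y : ZMod d,
      (∑ x : ZMod d, E d (m * x ^ 2)) * (starRingEnd ℂ) (E d (m * y ^ 2))
        = ∑ u : ZMod d, E d (m * u ^ 2) * E d (2 * m * u * y) := by
    intro y
    rw [E_conj, Finset.sum_mul]
    rw [← Equiv.sum_comp (Equiv.addLeft y) (fun x => E d (m * x ^ 2) * E d (-(m * y ^ 2)))]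
    refine Finset.sum_congr rfl fun u _ => ?_
    simp only [Equiv.coe_addLeft]
    rw [← E_add, ← E_add]
    congr 1
    ring
  simp only [step1]
  rw [Finset.sum_comm]
  have step2 : ∀ u : ZMod d,
      (∑ y : ZMod d, E d (m * u ^ 2) * E d (2 * m * u * y))
        = (if u = 0 then (d : ℂ) else 0) := by
    intro u
    rw [← Finset.mul_sum]
    by_cases hu : u = 0
    · subst hu
      rw [show m * (0 : ZMod d) ^ 2 = 0 by ring, E_zero, one_mul]
      have h1 : ∀ y : ZMod d, E d (2 * m * 0 * y) = 1 := fun y => by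
        rw [show (2 : ZMod d) * m * 0 * y = 0 by ring, E_zero]
      rw [Finset.sum_congr rfl fun y _ => h1 y, Finset.sum_const, Finset.card_univ, ZMod.card, if_pos rfl]
      simp
    · rw [if_neg hu]
      have h2mu : 2 * m * u ≠ 0 := by
        have h2 : (2 : ZMod d) ≠ 0 := two_ne_zero' hodd
        exact mul_ne_zero (mul_ne_zero h2 hm) hu
      have : ∀ y : ZMod d, E d (2 * m * u * y) = E d ((2 * m * u) * y) := fun y => rfl
      rw [sum_E_mul h2mu, mul_zero]
  rw [Finset.sum_congr rfl fun u _ => step2 u, Finset.sum_ite_eq' Finset.univ (0 : ZMod d)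
    (fun _ => (d : ℂ))]
  simp

lemma abs_gauss {d : ℕ} [Fact d.Prime] (hodd : Odd d) {m : ZMod d} (hm : m ≠ 0) :
    ‖∑ x : ZMod d, E d (m * x ^ 2)‖ = Real.sqrt d := by
  set G := ∑ x : ZMod d, E d (m * x ^ 2) with hG
  have h := gauss_mul_conj hodd hm
  rw [Complex.mul_conj] at h
  have hns : Complex.normSq G = d := by exact_mod_cast h
  rw [Complex.norm_def, hns]

lemma complete_square {d : ℕ} [Fact d.Prime] {m c : ZMod d} (h : 4 * m * c = 1)
    (n : ZMod d) :
    ∑ x : ZMod d, E d (m * x ^ 2 + n * x)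
      = E d (-(c * n ^ 2)) * ∑ x : ZMod d, E d (m * x ^ 2) := by
  haveI : NeZero d := ⟨(Fact.out : d.Prime).ne_zero⟩
  have step : ∀ x : ZMod d, E d (m * x ^ 2 + n * x)
      = E d (-(c * n ^ 2)) * E d (m * (x + 2 * c * n) ^ 2) := by
    intro x
    rw [← E_add]
    congr 1
    linear_combination (-(n * x) - c * n ^ 2) * h
  rw [Finset.sum_congr rfl fun x _ => step x, ← Finset.mul_sum]
  congr 1
  exact Equiv.sum_comp (Equiv.addRight (2 * c * n)) (fun y => E d (m * y ^ 2))


lemma stdH_apply {d : ℕ} [NeZero d] (t : ℕ) (x k : Fin d) :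
    stdH d t x k = (1 / Real.sqrt d : ℂ) *
      E d ((((((t : ℤ) - 1) * (x : ℤ) ^ 2 - (k : ℤ) * (x : ℤ) : ℤ)) : ZMod d)) := by
  show (1 / Real.sqrt d : ℂ) * _ = _
  congr 1
  rw [E_intCast, ζ, ← Complex.exp_int_mul]
  congr 1
  ring

lemma stdH_conj_apply {d : ℕ} [NeZero d] (t : ℕ) (x k : Fin d) :
    (starRingEnd ℂ) (stdH d t x k) = (1 / Real.sqrt d : ℂ) *
      E d (-((((((t : ℤ) - 1) * (x : ℤ) ^ 2 - (k : ℤ) * (x : ℤ) : ℤ)) : ZMod d))) := by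
  rw [stdH_apply, _root_.map_mul, E_conj]
  congr 1
  simp [Complex.conj_ofReal]

end HadAux

open HadAux

/-- For an odd prime `d` and distinct `j, k ∈ {1,…,d}`,
`H_k† H_j = M H_t†` for some monomial matrix `M`, where `t = 1 + χ` and
`χ ∈ {0,…,d-1}` satisfies `4(j-k)χ ≡ 1 (mod d)`. -/
theorem hadamard_product_monomial (d : ℕ) (hd : d.Prime) (hodd : Odd d)
    (j k : ℕ) (hj1 : 1 ≤ j) (hjd : j ≤ d) (hk1 : 1 ≤ k) (hkd : k ≤ d) (hjk : j ≠ k)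
    (χ : ℕ) (hχ : χ < d) (hχ1 : (4 * ((j : ℤ) - (k : ℤ)) * (χ : ℤ)) ≡ 1 [ZMOD d]) :
    ∃ M : Matrix (Fin d) (Fin d) ℂ, IsMonomial M ∧
      (stdH d k)ᴴ * stdH d j = M * (stdH d (1 + χ))ᴴ := by
  haveI hfact : Fact d.Prime := ⟨hd⟩
  haveI : NeZero d := ⟨hd.ne_zero⟩
  have hd1 : 1 < d := hd.one_lt
  have hdR : (0 : ℝ) < (d : ℝ) := by positivity
  have hsR : Real.sqrt d ≠ 0 := by positivity
  have hs0 : ((Real.sqrt d : ℝ) : ℂ) ≠ 0 := by exact_mod_cast hsR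
  have hsq : ((Real.sqrt d : ℝ) : ℂ) * ((Real.sqrt d : ℝ) : ℂ) = (d : ℂ) := by
    rw [← Complex.ofReal_mul, Real.mul_self_sqrt hdR.le]
    norm_cast
  have hd0 : (d : ℂ) ≠ 0 := by exact_mod_cast hdR.ne'
  -- the key ZMod quantities
  have hkey : 4 * ((j : ZMod d) - (k : ZMod d)) * (χ : ZMod d) = 1 := by
    have h : ((4 * ((j : ℤ) - (k : ℤ)) * (χ : ℤ) : ℤ) : ZMod d) = ((1 : ℤ) : ZMod d) :=
      (ZMod.intCast_eq_intCast_iff _ _ _).mpr hχ1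
    simp only [Int.cast_mul, Int.cast_sub, Int.cast_natCast, Int.cast_ofNat, Int.cast_one] at h
    exact h
  have hm : (j : ZMod d) - (k : ZMod d) ≠ 0 := by
    intro h
    rw [h] at hkey
    simp at hkey
  have h2c : (2 : ZMod d) * (χ : ZMod d) ≠ 0 := by
    intro h
    have h1 : (1 : ZMod d) = 0 := by
      rw [← hkey]; linear_combination 2 * ((j : ZMod d) - (k : ZMod d)) * h
    exact one_ne_zero h1
  set e := finEquivZMod d with he
  set σ : Equiv.Perm (Fin d) :=
    (finEquivZMod d).symm.permCongr (Equiv.mulLeft₀ ((2 : ZMod d) * (χ : ZMod d)) h2c) with hσ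
  have hσa : ∀ a : Fin d, (((σ a : Fin d) : ℕ) : ZMod d)
      = 2 * (χ : ZMod d) * ((a : ℕ) : ZMod d) := by
    intro a
    show finEquivZMod d (σ a) = _
    rw [hσ]
    simp [Equiv.permCongr_apply, Equiv.symm_symm, Equiv.apply_symm_apply]
  set G : ℂ := ∑ x : ZMod d, E d (((j : ZMod d) - (k : ZMod d)) * x ^ 2) with hG
  have habsG : ‖G‖ = Real.sqrt d := abs_gauss hodd hm
  set u : Fin d → ℂ := fun a =>
    (G / ((Real.sqrt d : ℝ) : ℂ)) * E d (-((χ : ZMod d) * ((a : ℕ) : ZMod d) ^ 2)) with hu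
  have habs : ∀ a, ‖u a‖ = 1 := by
    intro a
    rw [hu]
    rw [norm_mul, norm_div, habsG, abs_E, mul_one, Complex.norm_real, Real.norm_eq_abs,
      _root_.abs_of_nonneg (Real.sqrt_nonneg (d : ℝ)), div_self hsR]
  refine ⟨Matrix.of (fun a b => if b = σ a then u a else 0), ⟨σ, u, habs, rfl⟩, ?_⟩
  ext a b
  rw [Matrix.mul_apply, Matrix.mul_apply]
  simp only [Matrix.conjTranspose_apply, Matrix.of_apply, ite_mul, zero_mul,
    Finset.sum_ite_eq', Finset.mem_univ, if_true, Complex.star_def]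
  -- LHS term computation
  have hterm : ∀ x : Fin d, (starRingEnd ℂ) (stdH d k x a) * stdH d j x b
      = (1 / (d : ℂ)) * E d (((j : ZMod d) - (k : ZMod d)) * ((x : ℕ) : ZMod d) ^ 2
          + (((a : ℕ) : ZMod d) - ((b : ℕ) : ZMod d)) * ((x : ℕ) : ZMod d)) := by
    intro x
    rw [stdH_conj_apply, stdH_apply,
      show ∀ p q r s : ℂ, (p * q) * (r * s) = (p * r) * (q * s) from fun p q r s => by ring,
      show (1 / (Real.sqrt d : ℂ)) * (1 / (Real.sqrt d : ℂ)) = 1 / (d : ℂ) by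
        rw [div_mul_div_comm, one_mul, hsq], ← E_add]
    congr 1
    push_cast
    ring
  rw [Finset.sum_congr rfl fun x _ => hterm x, ← Finset.mul_sum,
    show (∑ x : Fin d, E d (((j : ZMod d) - (k : ZMod d)) * ((x : ℕ) : ZMod d) ^ 2
        + (((a : ℕ) : ZMod d) - ((b : ℕ) : ZMod d)) * ((x : ℕ) : ZMod d)))
      = ∑ z : ZMod d, E d (((j : ZMod d) - (k : ZMod d)) * z ^ 2
        + (((a : ℕ) : ZMod d) - ((b : ℕ) : ZMod d)) * z) from
      Equiv.sum_comp (finEquivZMod d) (fun z => E d (((j : ZMod d) - (k : ZMod d)) * z ^ 2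
        + (((a : ℕ) : ZMod d) - ((b : ℕ) : ZMod d)) * z)),
    complete_square hkey, stdH_conj_apply]
  -- now clean up the RHS exponent
  have hexp : -(((((1 + χ : ℕ) : ℤ) - 1) * ((b : Fin d) : ℤ) ^ 2
        - ((σ a : Fin d) : ℤ) * ((b : Fin d) : ℤ) : ℤ) : ZMod d)
      = -((χ : ZMod d) * ((b : ℕ) : ZMod d) ^ 2)
        + 2 * (χ : ZMod d) * ((a : ℕ) : ZMod d) * ((b : ℕ) : ZMod d) := by
    push_cast
    rw [hσa]
    push_cast
    ring
  rw [hexp, hu]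
  -- final scalar identity
  rw [show E d (-((χ : ZMod d) * ((b : ℕ) : ZMod d) ^ 2)
        + 2 * (χ : ZMod d) * ((a : ℕ) : ZMod d) * ((b : ℕ) : ZMod d))
      = E d ((χ : ZMod d) * ((a : ℕ) : ZMod d) ^ 2)
        * E d (-((χ : ZMod d) * (((a : ℕ) : ZMod d) - ((b : ℕ) : ZMod d)) ^ 2)) from by
    rw [← E_add]; congr 1; ring]
  have hEmul : E d (-((χ : ZMod d) * ((a : ℕ) : ZMod d) ^ 2))
      * E d ((χ : ZMod d) * ((a : ℕ) : ZMod d) ^ 2) = 1 := by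
    rw [← E_add, neg_add_cancel, E_zero]
  field_simp
  rw [show ((Real.sqrt d : ℝ) : ℂ) ^ 2 = (d : ℂ) by rw [sq, hsq]]
  linear_combination (-(G * E d (-((χ : ZMod d) * (((a : ℕ) : ZMod d)
    - ((b : ℕ) : ZMod d)) ^ 2)) * (d : ℂ))) * hEmul
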